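/- (Proposition 1) Let n_x ≥ 1, m ≥ 1, N = n_x·m, and K ≥ 3. Let h^1, ..., h^K ∈ ℝ^{n_x} have nonnegative entries, with Σ_{k=1}^{K} h^k_i = m for every bin i ∈ {1,...,n_x} and with total mass S(h^k) = Σ_i h^k_i > 0 for every k. For every nonempty proper subset A ⊆ {1,...,K}, let H^A = Σ_{k∈A} h^k, S_A = Σ_i H^A_i (so 0 < S_A < N), and define S̃I(A) = (n_x / (S_A(N - S_A))) · Σ_{i=1}^{n_x} (H^A_i - S_A/n_x)^2. Suppose k ≠ k' are indices and θ > 0 is such that h^{k'} = θ·h^k. If A* is a nonempty proper subset of {1,...,K} maximizing S̃I over all nonempty proper subsets, and S̃I(A*) > 0, then k ∈ A* if and only if k' ∈ A*; i.e., the two elementary clusters with perfectly correlated histograms lie on the same side of the optimal 2-partition. -/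

import Mathlib

theorem expand_plus (n : ℕ) (f g : Fin n → ℝ) (c d t : ℝ) :
    ∑ i, (f i + t * g i - (c + t * d)) ^ 2
      = (∑ i, (f i - c) ^ 2) + t * (2 * ∑ i, (f i - c) * (g i - d))
        + t ^ 2 * ∑ i, (g i - d) ^ 2 := by
  rw [Finset.mul_sum, Finset.mul_sum, Finset.mul_sum, ← Finset.sum_add_distrib,
    ← Finset.sum_add_distrib]
  exact Finset.sum_congr rfl fun i _ => by ring

theorem expand_minus (n : ℕ) (f g : Fin n → ℝ) (c d : ℝ) :
    ∑ i, (f i - g i - (c - d)) ^ 2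
      = (∑ i, (f i - c) ^ 2) - 2 * (∑ i, (f i - c) * (g i - d))
        + ∑ i, (g i - d) ^ 2 := by
  rw [Finset.mul_sum, ← Finset.sum_sub_distrib, ← Finset.sum_add_distrib]
  exact Finset.sum_congr rfl fun i _ => by ring

set_option maxHeartbeats 2000000 in
/-- Core lemma: if the correlated pair is split (k in A, k' not in A), we get a
contradiction with maximality of `SI A`. -/
theorem corr_core (nx m K : ℕ) (hnx : 1 ≤ nx)
    (N : ℕ) (hN : N = nx * m)
    (h : Fin K → Fin nx → ℝ)
    (hpart : ∀ i, ∑ k, h k i = (m : ℝ))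
    (hmass : ∀ k, 0 < ∑ i, h k i)
    (SI : Finset (Fin K) → ℝ)
    (hSI : ∀ A : Finset (Fin K),
      SI A = ((nx : ℝ) /
          ((∑ i, ∑ k ∈ A, h k i) * ((N : ℝ) - ∑ i, ∑ k ∈ A, h k i))) *
        ∑ i, ((∑ k ∈ A, h k i) - (∑ i, ∑ k ∈ A, h k i) / (nx : ℝ)) ^ 2)
    (k k' : Fin K) (θ : ℝ) (hθ : 0 < θ)
    (hcorr : ∀ i, h k' i = θ * h k i)
    (A : Finset (Fin K)) (hA : A.Nonempty) (hAproper : A ≠ Finset.univ)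
    (hmax : ∀ B : Finset (Fin K), B.Nonempty → B ≠ Finset.univ → SI B ≤ SI A)
    (hApos : 0 < SI A)
    (hkA : k ∈ A) (hk'A : k' ∉ A) : False := by
  have hnx0 : (0:ℝ) < nx := by exact_mod_cast hnx
  have hnx' : (nx:ℝ) ≠ 0 := ne_of_gt hnx0
  have hNr : (N:ℝ) = (nx:ℝ) * m := by rw [hN]; push_cast; ring
  have Spos : ∀ B : Finset (Fin K), B.Nonempty → 0 < ∑ i, ∑ j ∈ B, h j i := by
    intro B hB
    rw [Finset.sum_comm]
    exact Finset.sum_pos (fun j _ => hmass j) hB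
  have Stot : ∑ i, ∑ j : Fin K, h j i = (N:ℝ) := by
    rw [Finset.sum_congr rfl (fun i (_ : i ∈ Finset.univ) => hpart i),
      Finset.sum_const, Finset.card_univ, Fintype.card_fin, hNr]
    push_cast
    ring
  have Slt : ∀ B : Finset (Fin K), B ≠ Finset.univ → ∑ i, ∑ j ∈ B, h j i < (N:ℝ) := by
    intro B hB
    have hc : Bᶜ.Nonempty := by
      rw [Finset.nonempty_iff_ne_empty]
      intro hcon
      exact hB (Finset.compl_eq_empty_iff B |>.mp hcon)
    have hsplit : (∑ i, ∑ j ∈ B, h j i) + ∑ i, ∑ j ∈ Bᶜ, h j i = (N:ℝ) := by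
      rw [← Finset.sum_add_distrib, ← Stot]
      exact Finset.sum_congr rfl fun i _ => Finset.sum_add_sum_compl B _
    have := Spos Bᶜ hc
    linarith
  have key : ∀ B : Finset (Fin K), B.Nonempty → B ≠ Finset.univ →
      (nx:ℝ) * (∑ i, ((∑ j ∈ B, h j i) - (∑ i, ∑ j ∈ B, h j i)/(nx:ℝ))^2)
        ≤ SI A * ((∑ i, ∑ j ∈ B, h j i) * ((N:ℝ) - ∑ i, ∑ j ∈ B, h j i)) := by
    intro B hB hBp
    have hD : 0 < (∑ i, ∑ j ∈ B, h j i) * ((N:ℝ) - ∑ i, ∑ j ∈ B, h j i) :=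
      mul_pos (Spos B hB) (by linarith [Slt B hBp])
    have heq : (nx:ℝ) * (∑ i, ((∑ j ∈ B, h j i) - (∑ i, ∑ j ∈ B, h j i)/(nx:ℝ))^2)
        = SI B * ((∑ i, ∑ j ∈ B, h j i) * ((N:ℝ) - ∑ i, ∑ j ∈ B, h j i)) := by
      rw [hSI B, div_mul_eq_mul_div, div_mul_cancel₀ _ hD.ne']
    rw [heq]
    exact mul_le_mul_of_nonneg_right (hmax B hB hBp) hD.le
  -- opaque abbreviations
  obtain ⟨S, hSdef⟩ : ∃ x : ℝ, x = ∑ i, ∑ j ∈ A, h j i := ⟨_, rfl⟩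
  obtain ⟨s, hsdef⟩ : ∃ x : ℝ, x = ∑ i, h k i := ⟨_, rfl⟩
  have hs : 0 < s := by rw [hsdef]; exact hmass k
  have hSpos : 0 < S := by rw [hSdef]; exact Spos A hA
  have hSlt : S < (N:ℝ) := by rw [hSdef]; exact Slt A hAproper
  -- equality for A itself
  have e0 : (nx:ℝ) * (∑ i, ((∑ j ∈ A, h j i) - S/(nx:ℝ))^2) = SI A * (S * ((N:ℝ) - S)) := by
    have hD : 0 < S * ((N:ℝ) - S) := mul_pos hSpos (by linarith)
    have hSIA := hSI A
    rw [← hSdef] at hSIA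
    have hcalc : ((nx:ℝ) / (S * ((N:ℝ) - S)) * ∑ i, ((∑ j ∈ A, h j i) - S/(nx:ℝ))^2)
        * (S * ((N:ℝ) - S)) = (nx:ℝ) * (∑ i, ((∑ j ∈ A, h j i) - S/(nx:ℝ))^2) := by
      rw [div_mul_eq_mul_div, div_mul_cancel₀ _ hD.ne']
    rw [hSIA]
    exact hcalc.symm
  -- the θ endpoint (insert k')
  have eθ : (nx:ℝ) * (∑ i, ((∑ j ∈ A, h j i) + θ * h k i - (S/(nx:ℝ) + θ * (s/(nx:ℝ))))^2)
      ≤ SI A * ((S + θ*s) * ((N:ℝ) - (S + θ*s))) := by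
    have hins : ∀ i, ∑ j ∈ insert k' A, h j i = (∑ j ∈ A, h j i) + θ * h k i := by
      intro i
      rw [Finset.sum_insert hk'A, hcorr i]
      ring
    have hSi : ∑ i, ∑ j ∈ insert k' A, h j i = S + θ*s := by
      rw [Finset.sum_congr rfl (fun i _ => hins i), Finset.sum_add_distrib,
        ← Finset.mul_sum, ← hSdef, ← hsdef]
    have hdivsplit : (S + θ*s)/(nx:ℝ) = S/(nx:ℝ) + θ * (s/(nx:ℝ)) := by ring
    by_cases hu : insert k' A = Finset.univ
    · have hSN : S + θ*s = (N:ℝ) := by rw [← hSi, hu, Stot]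
      have hmi : ∀ i, (∑ j ∈ A, h j i) + θ * h k i = (m:ℝ) := by
        intro i
        rw [← hins i, hu]
        exact hpart i
      have hQ : (∑ i, ((∑ j ∈ A, h j i) + θ * h k i - (S/(nx:ℝ) + θ * (s/(nx:ℝ))))^2) = 0 := by
        apply Finset.sum_eq_zero
        intro i _
        rw [hmi i, ← hdivsplit, hSN, hNr, mul_div_cancel_left₀ _ hnx']
        ring
      rw [hQ, hSN]
      simp
    · have h2 := key (insert k' A) (Finset.insert_nonempty _ _) hu
      rw [hSi] at h2
      simp only [hins] at h2
      rw [hdivsplit] at h2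
      exact h2
  -- the -1 endpoint (erase k)
  have e1 : (nx:ℝ) * (∑ i, ((∑ j ∈ A, h j i) - h k i - (S/(nx:ℝ) - s/(nx:ℝ)))^2)
      ≤ SI A * ((S - s) * ((N:ℝ) - (S - s))) := by
    have hers : ∀ i, ∑ j ∈ A.erase k, h j i = (∑ j ∈ A, h j i) - h k i := by
      intro i
      have := Finset.add_sum_erase A (fun j => h j i) hkA
      linarith
    have hSe : ∑ i, ∑ j ∈ A.erase k, h j i = S - s := by
      rw [Finset.sum_congr rfl (fun i _ => hers i), Finset.sum_sub_distrib, ← hSdef, ← hsdef]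
    have hdivsplit : (S - s)/(nx:ℝ) = S/(nx:ℝ) - s/(nx:ℝ) := by ring
    by_cases he : A.erase k = ∅
    · have hAk : A = {k} := by
        apply Finset.eq_singleton_iff_unique_mem.mpr
        refine ⟨hkA, fun x hx => ?_⟩
        by_contra hne
        have hmem : x ∈ A.erase k := Finset.mem_erase.mpr ⟨hne, hx⟩
        simp [he] at hmem
      have hHg : ∀ i, (∑ j ∈ A, h j i) = h k i := by
        intro i
        rw [hAk, Finset.sum_singleton]
      have hSs : S = s := by
        rw [hSdef, hsdef]
        exact Finset.sum_congr rfl fun i _ => hHg i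
      have hQ : (∑ i, ((∑ j ∈ A, h j i) - h k i - (S/(nx:ℝ) - s/(nx:ℝ)))^2) = 0 := by
        apply Finset.sum_eq_zero
        intro i _
        rw [hHg i, hSs]
        ring
      rw [hQ, hSs]
      simp
    · have hne : (A.erase k).Nonempty := Finset.nonempty_iff_ne_empty.mpr he
      have hprop : A.erase k ≠ Finset.univ := by
        intro hcon
        apply hAproper
        apply Finset.univ_subset_iff.mp
        intro x hx
        exact Finset.mem_of_mem_erase (hcon ▸ hx)
      have h3 := key _ hne hprop
      rw [hSe] at h3
      simp only [hers] at h3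
      rw [hdivsplit] at h3
      exact h3
  -- quadratic expansions
  have hexp : (∑ i, ((∑ j ∈ A, h j i) + θ * h k i - (S/(nx:ℝ) + θ * (s/(nx:ℝ))))^2)
      = (∑ i, ((∑ j ∈ A, h j i) - S/(nx:ℝ))^2)
        + θ * (2 * ∑ i, ((∑ j ∈ A, h j i) - S/(nx:ℝ)) * (h k i - s/(nx:ℝ)))
        + θ^2 * ∑ i, (h k i - s/(nx:ℝ))^2 :=
    expand_plus nx (fun i => ∑ j ∈ A, h j i) (h k) (S/(nx:ℝ)) (s/(nx:ℝ)) θ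
  have hexm : (∑ i, ((∑ j ∈ A, h j i) - h k i - (S/(nx:ℝ) - s/(nx:ℝ)))^2)
      = (∑ i, ((∑ j ∈ A, h j i) - S/(nx:ℝ))^2)
        - 2 * (∑ i, ((∑ j ∈ A, h j i) - S/(nx:ℝ)) * (h k i - s/(nx:ℝ)))
        + ∑ i, (h k i - s/(nx:ℝ))^2 :=
    expand_minus nx (fun i => ∑ j ∈ A, h j i) (h k) (S/(nx:ℝ)) (s/(nx:ℝ))
  obtain ⟨Q0, hQ0⟩ : ∃ x : ℝ, x = ∑ i, ((∑ j ∈ A, h j i) - S/(nx:ℝ))^2 := ⟨_, rfl⟩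
  obtain ⟨uv, huv⟩ : ∃ x : ℝ, x = ∑ i, ((∑ j ∈ A, h j i) - S/(nx:ℝ)) * (h k i - s/(nx:ℝ)) :=
    ⟨_, rfl⟩
  obtain ⟨dd, hdd0⟩ : ∃ x : ℝ, x = ∑ i, (h k i - s/(nx:ℝ))^2 := ⟨_, rfl⟩
  rw [← hQ0, ← huv, ← hdd0] at hexp hexm
  rw [← hQ0] at e0
  rw [hexp] at eθ
  rw [hexm] at e1
  have hdd : 0 ≤ dd := by rw [hdd0]; exact Finset.sum_nonneg fun i _ => sq_nonneg _
  have key1 : ((nx:ℝ)*dd + SI A*s^2)*θ^2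
      + ((nx:ℝ)*(2*uv) - SI A*(s*(N:ℝ) - 2*S*s))*θ ≤ 0 := by nlinarith [eθ, e0]
  have key2 : ((nx:ℝ)*dd + SI A*s^2)
      - ((nx:ℝ)*(2*uv) - SI A*(s*(N:ℝ) - 2*S*s)) ≤ 0 := by nlinarith [e1, e0]
  have ha : 0 < (nx:ℝ)*dd + SI A*s^2 :=
    add_pos_of_nonneg_of_pos (mul_nonneg hnx0.le hdd) (by positivity)
  have hint1 : 0 ≤ (((nx:ℝ)*(2*uv) - SI A*(s*(N:ℝ) - 2*S*s)) - ((nx:ℝ)*dd + SI A*s^2)) * θ :=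
    mul_nonneg (by linarith) hθ.le
  nlinarith [key1, hint1, mul_pos ha hθ, mul_pos (mul_pos ha hθ) hθ]

/-- Proposition 1: two elementary clusters with perfectly correlated histograms
lie on the same side of a 2-partition (obtained by merging elementary clusters)
that maximizes the discretized first-order region-based Sobol' index. -/
theorem stmt18 (nx m K : ℕ) (hnx : 1 ≤ nx) (hm : 1 ≤ m) (hK : 3 ≤ K)
    (N : ℕ) (hN : N = nx * m)
    (h : Fin K → Fin nx → ℝ)
    (hnonneg : ∀ k i, 0 ≤ h k i)
    (hpart : ∀ i, ∑ k, h k i = (m : ℝ))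
    (hmass : ∀ k, 0 < ∑ i, h k i)
    (SI : Finset (Fin K) → ℝ)
    (hSI : ∀ A : Finset (Fin K),
      SI A = ((nx : ℝ) /
          ((∑ i, ∑ k ∈ A, h k i) * ((N : ℝ) - ∑ i, ∑ k ∈ A, h k i))) *
        ∑ i, ((∑ k ∈ A, h k i) - (∑ i, ∑ k ∈ A, h k i) / (nx : ℝ)) ^ 2)
    (k k' : Fin K) (hkk' : k ≠ k') (θ : ℝ) (hθ : 0 < θ)
    (hcorr : ∀ i, h k' i = θ * h k i)
    (A : Finset (Fin K)) (hA : A.Nonempty) (hAproper : A ≠ Finset.univ)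
    (hmax : ∀ B : Finset (Fin K), B.Nonempty → B ≠ Finset.univ → SI B ≤ SI A)
    (hApos : 0 < SI A) :
    k ∈ A ↔ k' ∈ A := by
  by_cases hk1 : k ∈ A <;> by_cases hk2 : k' ∈ A
  · exact iff_of_true hk1 hk2
  · exact absurd (corr_core nx m K hnx N hN h hpart hmass SI hSI k k' θ hθ hcorr
      A hA hAproper hmax hApos hk1 hk2) not_false
  · have hcorr' : ∀ i, h k i = θ⁻¹ * h k' i := by
      intro i
      rw [hcorr i, inv_mul_cancel_left₀ hθ.ne']
    exact absurd (corr_core nx m K hnx N hN h hpart hmass SI hSI k' k θ⁻¹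
      (inv_pos.mpr hθ) hcorr' A hA hAproper hmax hApos hk2 hk1) not_false
  · exact iff_of_false hk1 hk2
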